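/- Let μ ∈ ℝ^p, let Σ and Σ' be p×p positive definite matrices, let r ≥ 1, K = r + 1, let X, W_1, …, W_r be mutually independent with X ~ N_p(μ, Σ) and W_j ~ N_p(0, Σ'), let Q be a K×K orthogonal matrix with first column (q_1, …, q_K)ᵀ, and define X^(k) = q_k X + Σ_{j=1}^{r} Q_{k,j+1} W_j for k = 1, …, K. Let A and B be disjoint subsets of {1, …, K}, and set X^(A) = Σ_{k∈A} q_k X^(k), X^(B) = Σ_{k∈B} q_k X^(k), d_A = Σ_{k∈A} q_k², d_B = Σ_{k∈B} q_k². Then the 2p-dimensional vector (X^(A), X^(B)) is multivariate Gaussian with mean (d_A μ, d_B μ) and block covariance matrix with diagonal blocks d_A² Σ + d_A(1 − d_A) Σ' and d_B² Σ + d_B(1 − d_B) Σ' and off-diagonal blocks d_A d_B (Σ − Σ'). Moreover, if A ∪ B = {1, …, K}, then X^(A) + X^(B) = X almost surely. -/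

import Mathlib

open MeasureTheory ProbabilityTheory Matrix BigOperators

noncomputable section

open Real
open scoped NNReal ENNReal

/-- A measure `ν` on `ι → ℝ` is the multivariate Gaussian distribution with mean vector `m` and
covariance matrix `S` if every linear functional pushes `ν` forward to the one-dimensional
Gaussian distribution with the corresponding mean and variance (Cramér–Wold characterization). -/
def IsGaussianVec {ι : Type*} [Fintype ι] (ν : Measure (ι → ℝ)) (m : ι → ℝ)
    (S : Matrix ι ι ℝ) : Prop :=
  ∀ l : ι → ℝ,
    ν.map (fun x => ∑ i, l i * x i) =
      gaussianReal (∑ i, l i * m i) (∑ i, ∑ j, l i * S i j * l j).toNNReal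

/-- Factorization of the product of two Gaussian densities (completing the square). -/
lemma gaussianPDFReal_factor (m1 m2 : ℝ) (v1 v2 : ℝ≥0) (h1 : v1 ≠ 0) (h2 : v2 ≠ 0) (x y : ℝ) :
    gaussianPDFReal m1 v1 x * gaussianPDFReal (m2 + x) v2 y
      = gaussianPDFReal (m1 + m2) (v1 + v2) y *
        gaussianPDFReal (m1 + (v1 : ℝ) / (v1 + v2) * (y - m1 - m2)) (v1 * v2 / (v1 + v2)) x := by
  have hv1 : (0:ℝ) < v1 := lt_of_le_of_ne (v1.coe_nonneg) (by exact_mod_cast (Ne.symm h1))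
  have hv2 : (0:ℝ) < v2 := lt_of_le_of_ne (v2.coe_nonneg) (by exact_mod_cast (Ne.symm h2))
  have hv12 : (0:ℝ) < (v1:ℝ) + v2 := by linarith
  have hc : ((v1 * v2 / (v1 + v2) : ℝ≥0) : ℝ) = (v1:ℝ) * v2 / ((v1:ℝ) + v2) := by
    push_cast; ring
  unfold gaussianPDFReal
  push_cast [hc]
  rw [mul_mul_mul_comm, ← Real.exp_add, mul_mul_mul_comm, ← Real.exp_add]
  congr 1
  · rw [← mul_inv, ← mul_inv, ← Real.sqrt_mul (by positivity), ← Real.sqrt_mul (by positivity)]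
    congr 2
    field_simp
  · congr 1
    field_simp
    ring

lemma lintegral_gaussianPDF_conv (m1 m2 : ℝ) (v1 v2 : ℝ≥0) (h1 : v1 ≠ 0) (h2 : v2 ≠ 0) (y : ℝ) :
    ∫⁻ x, gaussianPDF m1 v1 x * gaussianPDF (m2 + x) v2 y
      = gaussianPDF (m1 + m2) (v1 + v2) y := by
  have hrw : ∀ x : ℝ, gaussianPDF m1 v1 x * gaussianPDF (m2 + x) v2 y
      = gaussianPDF (m1 + m2) (v1 + v2) y *
        gaussianPDF (m1 + (v1 : ℝ) / (v1 + v2) * (y - m1 - m2)) (v1 * v2 / (v1 + v2)) x := by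
    intro x
    rw [gaussianPDF, gaussianPDF, gaussianPDF, gaussianPDF,
      ← ENNReal.ofReal_mul (gaussianPDFReal_nonneg _ _ _),
      ← ENNReal.ofReal_mul (gaussianPDFReal_nonneg _ _ _),
      gaussianPDFReal_factor m1 m2 v1 v2 h1 h2 x y]
  simp_rw [hrw]
  rw [lintegral_const_mul _ (measurable_gaussianPDF _ _),
    lintegral_gaussianPDF_eq_one _ (by positivity), mul_one]

lemma gaussianPDF_shift (m2 x y : ℝ) (v2 : ℝ≥0) :
    gaussianPDF (m2 + x) v2 y = gaussianPDF m2 v2 (y - x) := by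
  rw [gaussianPDF, gaussianPDF, gaussianPDFReal_sub]

lemma measurable_gaussianPDF_shift (m2 : ℝ) (v2 : ℝ≥0) :
    Measurable (fun q : ℝ × ℝ => gaussianPDF (m2 + q.1) v2 q.2) := by
  simp_rw [gaussianPDF_shift]
  exact (measurable_gaussianPDF m2 v2).comp (measurable_snd.sub measurable_fst)

/-- Convolution of Gaussian measures is Gaussian. -/
lemma gaussianReal_conv_gaussianReal (m1 m2 : ℝ) (v1 v2 : ℝ≥0) :
    ((gaussianReal m1 v1).prod (gaussianReal m2 v2)).map (fun p : ℝ × ℝ => p.1 + p.2)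
      = gaussianReal (m1 + m2) (v1 + v2) := by
  by_cases h1 : v1 = 0
  · subst h1
    rw [gaussianReal_zero_var, Measure.dirac_prod,
      Measure.map_map (by fun_prop) (by fun_prop)]
    simpa [Function.comp_def] using
      (gaussianReal_map_const_add (μ := m2) (v := v2) m1).trans (by rw [add_comm])
  by_cases h2 : v2 = 0
  · subst h2
    rw [gaussianReal_zero_var, Measure.prod_dirac,
      Measure.map_map (by fun_prop) (by fun_prop)]
    simpa [Function.comp_def] using
      (gaussianReal_map_add_const (μ := m1) (v := v1) m2)
  ext s hs
  rw [Measure.map_apply (by fun_prop) hs, Measure.prod_apply (measurable_add hs)]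
  have hmk : ∀ x : ℝ, (Prod.mk x ⁻¹' ((fun p : ℝ × ℝ => p.1 + p.2) ⁻¹' s))
      = (fun y => x + y) ⁻¹' s := by intro x; rfl
  have hfi : ∀ x : ℝ, gaussianReal m2 v2 ((fun y => x + y) ⁻¹' s)
      = ∫⁻ y in s, gaussianPDF (m2 + x) v2 y := by
    intro x
    rw [← Measure.map_apply (by fun_prop) hs, gaussianReal_map_const_add x,
      gaussianReal_apply _ h2]
  simp_rw [hmk, hfi]
  have hmeas_inner : Measurable fun x : ℝ => ∫⁻ y in s, gaussianPDF (m2 + x) v2 y :=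
    Measurable.lintegral_prod_right' (measurable_gaussianPDF_shift m2 v2)
  rw [gaussianReal_of_var_ne_zero _ h1,
    lintegral_withDensity_eq_lintegral_mul _ (measurable_gaussianPDF _ _) hmeas_inner]
  have hpt : ∀ x : ℝ, (gaussianPDF m1 v1 * fun x => ∫⁻ y in s, gaussianPDF (m2 + x) v2 y) x
      = ∫⁻ y in s, gaussianPDF m1 v1 x * gaussianPDF (m2 + x) v2 y := by
    intro x
    simp only [Pi.mul_apply]
    rw [← lintegral_const_mul _ (measurable_gaussianPDF (m2 + x) v2)]
  simp_rw [hpt]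
  rw [lintegral_lintegral_swap]
  · have : ∀ y : ℝ, (∫⁻ x, gaussianPDF m1 v1 x * gaussianPDF (m2 + x) v2 y)
        = gaussianPDF (m1 + m2) (v1 + v2) y :=
      fun y => lintegral_gaussianPDF_conv m1 m2 v1 v2 h1 h2 y
    simp_rw [this]
    rw [← gaussianReal_apply _ (by positivity) s]
  · exact (((measurable_gaussianPDF m1 v1).comp measurable_fst).mul
      (measurable_gaussianPDF_shift m2 v2)).aemeasurable

lemma indepFun_gaussian_add {Ω : Type*} [MeasurableSpace Ω] {P : Measure Ω}
    [IsProbabilityMeasure P] {X Y : Ω → ℝ} (hX : Measurable X) (hY : Measurable Y)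
    (h : IndepFun X Y P) {m1 m2 : ℝ} {v1 v2 : ℝ≥0}
    (h1 : P.map X = gaussianReal m1 v1) (h2 : P.map Y = gaussianReal m2 v2) :
    P.map (X + Y) = gaussianReal (m1 + m2) (v1 + v2) := by
  have hprod : P.map (fun ω => (X ω, Y ω)) = (P.map X).prod (P.map Y) :=
    (indepFun_iff_map_prod_eq_prod_map_map hX.aemeasurable hY.aemeasurable).mp h
  have : (X + Y) = (fun p : ℝ × ℝ => p.1 + p.2) ∘ (fun ω => (X ω, Y ω)) := rfl
  rw [this, ← Measure.map_map (by fun_prop) (hX.prodMk hY), hprod, h1, h2,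
    _root_.gaussianReal_conv_gaussianReal]

lemma iIndepFun_gaussian_sum {Ω : Type*} [MeasurableSpace Ω] {P : Measure Ω}
    [IsProbabilityMeasure P] {n : ℕ} {Y : Fin n → Ω → ℝ}
    (h_indep : iIndepFun Y P) (h_meas : ∀ i, Measurable (Y i))
    {m : Fin n → ℝ} {v : Fin n → ℝ≥0}
    (h : ∀ i, P.map (Y i) = gaussianReal (m i) (v i)) (s : Finset (Fin n)) :
    P.map (∑ i ∈ s, Y i) = gaussianReal (∑ i ∈ s, m i) (∑ i ∈ s, v i) := by
  classical
  induction s using Finset.induction_on with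
  | empty =>
      simp only [Finset.sum_empty]
      rw [show (0 : Ω → ℝ) = fun _ => (0:ℝ) from rfl, Measure.map_const]
      simp [← gaussianReal_zero_var]
  | @insert a s' hi ih =>
      rw [Finset.sum_insert hi, Finset.sum_insert hi, Finset.sum_insert hi]
      have hsum : IndepFun (Y a) (∑ j ∈ s', Y j) P :=
        (h_indep.indepFun_finsetSum_of_notMem h_meas hi).symm
      have he : (∑ j ∈ s', Y j) = fun ω => ∑ j ∈ s', Y j ω :=
        funext fun ω => Finset.sum_apply ω s' Y
      rw [he] at hsum
      have hmsum : Measurable (fun ω => ∑ i ∈ s', Y i ω) :=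
        Finset.measurable_sum s' fun i _ => h_meas i
      rw [he] at ih ⊢
      exact indepFun_gaussian_add (h_meas a) hmsum hsum (h a) (ih)

lemma quad_expand {p : ℕ} (M : Matrix (Fin p) (Fin p) ℝ) (u v : Fin p → ℝ) (s t : ℝ) :
    ∑ i, ∑ j, (s * u i + t * v i) * M i j * (s * u j + t * v j)
      = s^2 * (∑ i, ∑ j, u i * M i j * u j) + s*t*(∑ i, ∑ j, u i * M i j * v j)
        + s*t*(∑ i, ∑ j, v i * M i j * u j) + t^2*(∑ i, ∑ j, v i * M i j * v j) := by
  simp only [Finset.mul_sum, ← Finset.sum_add_distrib]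
  refine Finset.sum_congr rfl fun i _ => ?_
  refine Finset.sum_congr rfl fun j _ => ?_
  ring

lemma quad_chunk {p : ℕ} (M N : Matrix (Fin p) (Fin p) ℝ) (u v : Fin p → ℝ) (α β : ℝ) :
    ∑ i, ∑ j, u i * (α * M i j + β * N i j) * v j
      = α * (∑ i, ∑ j, u i * M i j * v j) + β * (∑ i, ∑ j, u i * N i j * v j) := by
  simp only [Finset.mul_sum, ← Finset.sum_add_distrib]
  refine Finset.sum_congr rfl fun i _ => ?_
  refine Finset.sum_congr rfl fun j _ => ?_
  ring

lemma quad_nonneg {p : ℕ} {M : Matrix (Fin p) (Fin p) ℝ} (hM : M.PosSemidef)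
    (u : Fin p → ℝ) : 0 ≤ ∑ i, ∑ j, u i * M i j * u j := by
  have h := hM.dotProduct_mulVec_nonneg u
  simpa [dotProduct, Matrix.mulVec, Finset.mul_sum, mul_assoc] using h

/-- Corollary 2 (collapsing disjoint subsets of the `K = r + 1` dependent folds of Theorem 2):
with `X⁽ᵏ⁾ = q_k X + ∑_j Q_{k,j+1} W_j`, `X⁽ᴬ⁾ = ∑_{k∈A} q_k X⁽ᵏ⁾`, `d_A = ∑_{k∈A} q_k²`
(similarly for `B` disjoint from `A`), the pair `(X⁽ᴬ⁾, X⁽ᴮ⁾)` is jointly Gaussian with mean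
`(d_A μ, d_B μ)`, diagonal covariance blocks `d_A² S + d_A(1−d_A) S'` and
`d_B² S + d_B(1−d_B) S'`, and off-diagonal blocks `d_A d_B (S − S')`; and if `A ∪ B` is
everything, `X⁽ᴬ⁾ + X⁽ᴮ⁾ = X` almost surely. -/
theorem collapse_dependent_folds
    {Ω : Type*} [MeasurableSpace Ω] (P : Measure Ω) [IsProbabilityMeasure P]
    (p r : ℕ) (hr : 1 ≤ r) (μ : Fin p → ℝ)
    (S S' : Matrix (Fin p) (Fin p) ℝ) (hS : S.PosDef) (hS' : S'.PosDef)
    (X : Ω → Fin p → ℝ) (W : Fin r → Ω → Fin p → ℝ)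
    (hXm : Measurable X) (hWm : ∀ j, Measurable (W j))
    (hindep : iIndepFun
      (Fin.cons X W : Fin (r + 1) → Ω → Fin p → ℝ) P)
    (hX : IsGaussianVec (P.map X) μ S)
    (hW : ∀ j, IsGaussianVec (P.map (W j)) (fun _ => 0) S')
    (Q : Matrix (Fin (r + 1)) (Fin (r + 1)) ℝ) (hQ : Qᵀ * Q = 1)
    (Xf : Fin (r + 1) → Ω → Fin p → ℝ)
    (hXf : ∀ k ω i, Xf k ω i = Q k 0 * X ω i + ∑ j : Fin r, Q k j.succ * W j ω i)
    (A B : Finset (Fin (r + 1))) (hAB : Disjoint A B)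
    (XA XB : Ω → Fin p → ℝ)
    (hXA : ∀ ω i, XA ω i = ∑ k ∈ A, Q k 0 * Xf k ω i)
    (hXB : ∀ ω i, XB ω i = ∑ k ∈ B, Q k 0 * Xf k ω i)
    (dA dB : ℝ) (hdA : dA = ∑ k ∈ A, Q k 0 ^ 2) (hdB : dB = ∑ k ∈ B, Q k 0 ^ 2) :
    IsGaussianVec
        (P.map (fun ω => Sum.elim (XA ω) (XB ω)))
        (Sum.elim (fun i => dA * μ i) (fun i => dB * μ i))
        (Matrix.fromBlocks
          (dA ^ 2 • S + (dA * (1 - dA)) • S') ((dA * dB) • (S - S'))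
          ((dA * dB) • (S - S')) (dB ^ 2 • S + (dB * (1 - dB)) • S')) ∧
      (A ∪ B = Finset.univ → ∀ᵐ ω ∂P, ∀ i, XA ω i + XB ω i = X ω i) := by
  classical
  have hQQT : Q * Qᵀ = 1 := by rwa [mul_eq_one_comm] at hQ
  have hcol : ∀ a b, ∑ k, Q k a * Q k b = if a = b then (1:ℝ) else 0 := by
    intro a b
    have := congrFun (congrFun hQ a) b
    simpa [Matrix.mul_apply, Matrix.one_apply, Matrix.transpose_apply] using this
  have hrow : ∀ k k', ∑ j : Fin r, Q k j.succ * Q k' j.succ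
      = (if k = k' then (1:ℝ) else 0) - Q k 0 * Q k' 0 := by
    intro k k'
    have := congrFun (congrFun hQQT k) k'
    rw [Matrix.mul_apply] at this
    rw [Fin.sum_univ_succ] at this
    simp only [Matrix.transpose_apply, Matrix.one_apply] at this
    linarith [this]
  have hcc : ∀ s t : Finset (Fin (r+1)),
      ∑ j : Fin r, (∑ k ∈ s, Q k 0 * Q k j.succ) * (∑ k' ∈ t, Q k' 0 * Q k' j.succ)
        = (∑ k ∈ s ∩ t, Q k 0 ^ 2) - (∑ k ∈ s, Q k 0 ^ 2) * (∑ k ∈ t, Q k 0 ^ 2) := by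
    intro s t
    have step : ∀ (k k' : Fin (r+1)), ∑ j : Fin r, (Q k 0 * Q k j.succ) * (Q k' 0 * Q k' j.succ)
        = Q k 0 * Q k' 0 * ((if k = k' then (1:ℝ) else 0) - Q k 0 * Q k' 0) := by
      intro k k'
      rw [← hrow k k', Finset.mul_sum]
      exact Finset.sum_congr rfl fun j _ => by ring
    calc ∑ j : Fin r, (∑ k ∈ s, Q k 0 * Q k j.succ) * (∑ k' ∈ t, Q k' 0 * Q k' j.succ)
        = ∑ k ∈ s, ∑ k' ∈ t, ∑ j : Fin r, (Q k 0 * Q k j.succ) * (Q k' 0 * Q k' j.succ) := by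
          simp_rw [Finset.sum_mul, Finset.mul_sum]
          rw [Finset.sum_comm]
          refine Finset.sum_congr rfl fun k _ => ?_
          rw [Finset.sum_comm]
      _ = ∑ k ∈ s, ∑ k' ∈ t,
            (Q k 0 * Q k' 0 * ((if k = k' then (1:ℝ) else 0) - Q k 0 * Q k' 0)) := by
          simp_rw [step]
      _ = (∑ k ∈ s ∩ t, Q k 0 ^ 2) - (∑ k ∈ s, Q k 0 ^ 2) * (∑ k ∈ t, Q k 0 ^ 2) := by
          simp_rw [mul_sub, Finset.sum_sub_distrib]
          congr 1
          · have h1 : ∀ k, ∑ k' ∈ t, Q k 0 * Q k' 0 * (if k = k' then (1:ℝ) else 0)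
                = if k ∈ t then Q k 0 ^ 2 else 0 := by
              intro k
              simp [mul_ite, mul_zero, mul_one, Finset.sum_ite_eq, sq]
            simp_rw [h1]
            rw [← Finset.sum_ite_mem]
          · rw [Finset.sum_mul_sum]
            exact Finset.sum_congr rfl fun k _ =>
              Finset.sum_congr rfl fun k' _ => by ring
  -- expanded forms of XA, XB
  have hXAeq : ∀ ω i, XA ω i
      = dA * X ω i + ∑ j : Fin r, (∑ k ∈ A, Q k 0 * Q k j.succ) * W j ω i := by
    intro ω i
    rw [hXA]
    have : ∀ k, Q k 0 * Xf k ω i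
        = Q k 0 ^ 2 * X ω i + ∑ j : Fin r, (Q k 0 * Q k j.succ) * W j ω i := by
      intro k
      rw [hXf, mul_add, Finset.mul_sum]
      congr 1
      · ring
      · exact Finset.sum_congr rfl fun j _ => by ring
    simp_rw [this]
    rw [Finset.sum_add_distrib, hdA, Finset.sum_mul, Finset.sum_comm]
    congr 1
    exact Finset.sum_congr rfl fun j _ => by rw [Finset.sum_mul]
  have hXBeq : ∀ ω i, XB ω i
      = dB * X ω i + ∑ j : Fin r, (∑ k ∈ B, Q k 0 * Q k j.succ) * W j ω i := by
    intro ω i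
    rw [hXB]
    have : ∀ k, Q k 0 * Xf k ω i
        = Q k 0 ^ 2 * X ω i + ∑ j : Fin r, (Q k 0 * Q k j.succ) * W j ω i := by
      intro k
      rw [hXf, mul_add, Finset.mul_sum]
      congr 1
      · ring
      · exact Finset.sum_congr rfl fun j _ => by ring
    simp_rw [this]
    rw [Finset.sum_add_distrib, hdB, Finset.sum_mul, Finset.sum_comm]
    congr 1
    exact Finset.sum_congr rfl fun j _ => by rw [Finset.sum_mul]
  constructor
  · intro l
    set lA : Fin p → ℝ := fun i => l (Sum.inl i) with hlAdef
    set lB : Fin p → ℝ := fun i => l (Sum.inr i) with hlBdef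
    set cA : Fin r → ℝ := fun j => ∑ k ∈ A, Q k 0 * Q k j.succ with hcAdef
    set cB : Fin r → ℝ := fun j => ∑ k ∈ B, Q k 0 * Q k j.succ with hcBdef
    set c : Fin (r+1) → Fin p → ℝ :=
      Fin.cons (fun i => dA * lA i + dB * lB i)
        (fun j i => cA j * lA i + cB j * lB i) with hcdef
    set Y : Fin (r+1) → Ω → ℝ :=
      fun k ω => ∑ i, c k i * (Fin.cons X W : Fin (r+1) → Ω → Fin p → ℝ) k ω i with hYdef
    have hgm : ∀ k : Fin (r+1), Measurable (fun x : Fin p → ℝ => ∑ i, c k i * x i) :=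
      fun k => Finset.measurable_sum _ fun i _ => (measurable_pi_apply i).const_mul _
    have hFm : ∀ k, Measurable ((Fin.cons X W : Fin (r+1) → Ω → Fin p → ℝ) k) := by
      intro k
      induction k using Fin.cases with
      | zero => simpa using hXm
      | succ j => simpa using hWm j
    have hYm : ∀ k, Measurable (Y k) := fun k => (hgm k).comp (hFm k)
    have hYindep : iIndepFun Y P :=
      hindep.comp (fun k (x : Fin p → ℝ) => ∑ i, c k i * x i) hgm
    set mY : Fin (r+1) → ℝ := Fin.cons (∑ i, c 0 i * μ i) (fun _ => 0) with hmYdef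
    set vY : Fin (r+1) → ℝ≥0 :=
      Fin.cons ((∑ i, ∑ j, c 0 i * S i j * c 0 j).toNNReal)
        (fun j => (∑ i, ∑ i', c j.succ i * S' i i' * c j.succ i').toNNReal) with hvYdef
    have hlaw : ∀ k, P.map (Y k) = gaussianReal (mY k) (vY k) := by
      intro k
      induction k using Fin.cases with
      | zero =>
          have hcomp : Y 0 = (fun x : Fin p → ℝ => ∑ i, c 0 i * x i) ∘ X := by
            funext ω; simp [hYdef]
          rw [hcomp, ← Measure.map_map (hgm 0) hXm, hX (c 0)]
          simp [hmYdef, hvYdef]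
      | succ j =>
          have hcomp : Y j.succ
              = (fun x : Fin p → ℝ => ∑ i, c j.succ i * x i) ∘ (W j) := by
            funext ω; simp [hYdef]
          rw [hcomp, ← Measure.map_map (hgm j.succ) (hWm j), hW j (c j.succ)]
          simp [hmYdef, hvYdef]
    have hXAm : Measurable XA := by
      have hfe : XA = fun ω i => dA * X ω i + ∑ j : Fin r, cA j * W j ω i := by
        funext ω i; exact hXAeq ω i
      rw [hfe]
      exact measurable_pi_lambda _ fun i =>
        (((measurable_pi_apply i).comp hXm).const_mul dA).add
          (Finset.measurable_sum _ fun j _ =>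
            ((measurable_pi_apply i).comp (hWm j)).const_mul _)
    have hXBm : Measurable XB := by
      have hfe : XB = fun ω i => dB * X ω i + ∑ j : Fin r, cB j * W j ω i := by
        funext ω i; exact hXBeq ω i
      rw [hfe]
      exact measurable_pi_lambda _ fun i =>
        (((measurable_pi_apply i).comp hXm).const_mul dB).add
          (Finset.measurable_sum _ fun j _ =>
            ((measurable_pi_apply i).comp (hWm j)).const_mul _)
    have hElim : Measurable (fun ω => Sum.elim (XA ω) (XB ω)) := by
      apply measurable_pi_lambda
      intro i
      cases i with
      | inl i => exact (measurable_pi_apply i).comp hXAm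
      | inr i => exact (measurable_pi_apply i).comp hXBm
    have hsum : (fun ω => ∑ i : Fin p ⊕ Fin p, l i * Sum.elim (XA ω) (XB ω) i)
        = ∑ k, Y k := by
      funext ω
      rw [Finset.sum_apply, Fintype.sum_sum_type]
      simp only [Sum.elim_inl, Sum.elim_inr]
      rw [Fin.sum_univ_succ]
      have hY0 : Y 0 ω = ∑ i, (dA * lA i + dB * lB i) * X ω i := by
        simp [hYdef, hcdef]
      have hYs : ∀ j : Fin r, Y j.succ ω = ∑ i, (cA j * lA i + cB j * lB i) * W j ω i := by
        intro j; simp [hYdef, hcdef]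
      rw [hY0]
      simp_rw [hYs, hXAeq, hXBeq]
      simp_rw [show ∀ j : Fin r, (∑ k ∈ A, Q k 0 * Q k j.succ) = cA j from fun _ => rfl,
        show ∀ j : Fin r, (∑ k ∈ B, Q k 0 * Q k j.succ) = cB j from fun _ => rfl]
      simp only [show ∀ i : Fin p, l (Sum.inl i) = lA i from fun _ => rfl,
        show ∀ i : Fin p, l (Sum.inr i) = lB i from fun _ => rfl]
      simp only [mul_add, add_mul, Finset.mul_sum, Finset.sum_add_distrib]
      rw [Finset.sum_comm (s := Finset.univ) (t := Finset.univ)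
        (f := fun i j => lA i * (cA j * W j ω i))]
      rw [Finset.sum_comm (s := Finset.univ) (t := Finset.univ)
        (f := fun i j => lB i * (cB j * W j ω i))]
      have hcomm2 : ∀ (a b x : ℝ), a * (b * x) = a * b * x := fun a b x => by ring
      simp only [hcomm2]
      have sA : ∑ x : Fin p, lA x * dA * X ω x = ∑ x : Fin p, dA * lA x * X ω x :=
        Finset.sum_congr rfl fun x _ => by ring
      have sB : ∑ x : Fin p, lB x * dB * X ω x = ∑ x : Fin p, dB * lB x * X ω x :=
        Finset.sum_congr rfl fun x _ => by ring
      have sC : ∑ x : Fin r, ∑ y : Fin p, lA y * cA x * W x ω y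
          = ∑ x : Fin r, ∑ y : Fin p, cA x * lA y * W x ω y :=
        Finset.sum_congr rfl fun x _ => Finset.sum_congr rfl fun y _ => by ring
      have sD : ∑ x : Fin r, ∑ y : Fin p, lB y * cB x * W x ω y
          = ∑ x : Fin r, ∑ y : Fin p, cB x * lB y * W x ω y :=
        Finset.sum_congr rfl fun x _ => Finset.sum_congr rfl fun y _ => by ring
      rw [sA, sB, sC, sD]
      ring
    have hmap : (P.map (fun ω => Sum.elim (XA ω) (XB ω))).map
          (fun x : (Fin p ⊕ Fin p) → ℝ => ∑ i, l i * x i)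
        = P.map (∑ k, Y k) := by
      rw [Measure.map_map (Finset.measurable_sum _ fun i _ =>
        (measurable_pi_apply i).const_mul _) hElim]
      have hce : ((fun a : (Fin p ⊕ Fin p) → ℝ => ∑ i, l i * a i) ∘
            fun ω => Sum.elim (XA ω) (XB ω))
          = fun ω => ∑ i : Fin p ⊕ Fin p, l i * Sum.elim (XA ω) (XB ω) i := rfl
      rw [hce, hsum]
    rw [IsGaussianVec] at *
    rw [hmap, iIndepFun_gaussian_sum hYindep hYm hlaw Finset.univ]
    -- mean identity
    have hmean : ∑ k, mY k
        = ∑ i : Fin p ⊕ Fin p, l i * (Sum.elim (fun i => dA * μ i) (fun i => dB * μ i)) i := by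
      rw [Fin.sum_univ_succ]
      simp only [hmYdef, Fin.cons_zero, Fin.cons_succ, Finset.sum_const_zero, add_zero,
        Fintype.sum_sum_type, Sum.elim_inl, Sum.elim_inr]
      rw [← Finset.sum_add_distrib]
      refine Finset.sum_congr rfl fun i _ => ?_
      simp only [hcdef, Fin.cons_zero]
      ring
    -- variance identity
    have ha1 : (0:ℝ) ≤ ∑ i, ∑ j, c 0 i * S i j * c 0 j := quad_nonneg hS.posSemidef _
    have ha2 : ∀ j : Fin r, (0:ℝ) ≤ ∑ i, ∑ i', c j.succ i * S' i i' * c j.succ i' :=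
      fun j => quad_nonneg hS'.posSemidef _
    have e1 : ∑ j, cA j * cA j = dA - dA * dA := by
      have := hcc A A
      rw [Finset.inter_self] at this
      rw [hcAdef]
      rw [this, ← hdA]
    have e2 : ∑ j, cA j * cB j = -(dA * dB) := by
      have := hcc A B
      rw [Finset.disjoint_iff_inter_eq_empty.mp hAB] at this
      rw [hcAdef, hcBdef, this, ← hdA, ← hdB]
      simp
    have e3 : ∑ j, cB j * cB j = dB - dB * dB := by
      have := hcc B B
      rw [Finset.inter_self] at this
      rw [hcBdef, this, ← hdB]
    have hvreal : ((∑ k, vY k : ℝ≥0) : ℝ)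
        = ∑ i : Fin p ⊕ Fin p, ∑ j : Fin p ⊕ Fin p,
            l i * (Matrix.fromBlocks
              (dA ^ 2 • S + (dA * (1 - dA)) • S') ((dA * dB) • (S - S'))
              ((dA * dB) • (S - S')) (dB ^ 2 • S + (dB * (1 - dB)) • S')) i j * l j := by
      rw [NNReal.coe_sum, Fin.sum_univ_succ]
      simp only [hvYdef, Fin.cons_zero, Fin.cons_succ]
      rw [Real.coe_toNNReal _ ha1]
      have hcoes : ∀ j : Fin r,
          (((∑ i, ∑ i', c j.succ i * S' i i' * c j.succ i').toNNReal : ℝ≥0) : ℝ)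
            = ∑ i, ∑ i', c j.succ i * S' i i' * c j.succ i' :=
        fun j => Real.coe_toNNReal _ (ha2 j)
      simp_rw [hcoes]
      -- unfold c
      simp only [hcdef, Fin.cons_zero, Fin.cons_succ]
      rw [quad_expand S lA lB dA dB]
      have hqe : ∀ j : Fin r,
          ∑ i, ∑ i', (cA j * lA i + cB j * lB i) * S' i i' * (cA j * lA i' + cB j * lB i')
            = (cA j)^2 * (∑ i, ∑ i', lA i * S' i i' * lA i')
              + (cA j)*(cB j)*(∑ i, ∑ i', lA i * S' i i' * lB i')
              + (cA j)*(cB j)*(∑ i, ∑ i', lB i * S' i i' * lA i')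
              + (cB j)^2*(∑ i, ∑ i', lB i * S' i i' * lB i') :=
        fun j => quad_expand S' lA lB (cA j) (cB j)
      simp_rw [hqe]
      rw [Finset.sum_add_distrib, Finset.sum_add_distrib, Finset.sum_add_distrib,
        ← Finset.sum_mul, ← Finset.sum_mul, ← Finset.sum_mul, ← Finset.sum_mul]
      simp_rw [sq]
      rw [e1, e2, e3]
      -- expand the RHS block sum
      rw [Fintype.sum_sum_type]
      simp only [Fintype.sum_sum_type, Sum.elim_inl, Sum.elim_inr,
        Matrix.fromBlocks_apply₁₁, Matrix.fromBlocks_apply₁₂,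
        Matrix.fromBlocks_apply₂₁, Matrix.fromBlocks_apply₂₂,
        Matrix.add_apply, Matrix.smul_apply, Matrix.sub_apply, smul_eq_mul]
      rw [Finset.sum_add_distrib, Finset.sum_add_distrib]
      have hb11 : ∑ i, ∑ j, l (Sum.inl i) * (dA * dA * S i j + dA * (1 - dA) * S' i j)
            * l (Sum.inl j)
          = dA*dA * (∑ i, ∑ j, lA i * S i j * lA j)
            + (dA * (1 - dA)) * (∑ i, ∑ j, lA i * S' i j * lA j) :=
        quad_chunk S S' lA lA (dA*dA) (dA * (1 - dA))
      have hb22 : ∑ i, ∑ j, l (Sum.inr i) * (dB * dB * S i j + dB * (1 - dB) * S' i j)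
            * l (Sum.inr j)
          = dB*dB * (∑ i, ∑ j, lB i * S i j * lB j)
            + (dB * (1 - dB)) * (∑ i, ∑ j, lB i * S' i j * lB j) :=
        quad_chunk S S' lB lB (dB*dB) (dB * (1 - dB))
      have hb12 : ∑ i, ∑ j, l (Sum.inl i) * (dA * dB * (S i j - S' i j)) * l (Sum.inr j)
          = (dA * dB) * (∑ i, ∑ j, lA i * S i j * lB j)
            - (dA * dB) * (∑ i, ∑ j, lA i * S' i j * lB j) := by
        have := quad_chunk S S' lA lB (dA * dB) (-(dA * dB))
        rw [show ∀ x y : ℝ, (dA*dB) * x + (-(dA*dB)) * y = dA*dB*x - dA*dB*y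
          from fun x y => by ring] at this
        rw [← this]
        refine Finset.sum_congr rfl fun i _ => Finset.sum_congr rfl fun j _ => ?_
        ring
      have hb21 : ∑ i, ∑ j, l (Sum.inr i) * (dA * dB * (S i j - S' i j)) * l (Sum.inl j)
          = (dA * dB) * (∑ i, ∑ j, lB i * S i j * lA j)
            - (dA * dB) * (∑ i, ∑ j, lB i * S' i j * lA j) := by
        have := quad_chunk S S' lB lA (dA * dB) (-(dA * dB))
        rw [show ∀ x y : ℝ, (dA*dB) * x + (-(dA*dB)) * y = dA*dB*x - dA*dB*y
          from fun x y => by ring] at this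
        rw [← this]
        refine Finset.sum_congr rfl fun i _ => Finset.sum_congr rfl fun j _ => ?_
        ring
      rw [hb11, hb22, hb12, hb21]
      ring
    have hvar : (∑ k, vY k)
        = (∑ i : Fin p ⊕ Fin p, ∑ j : Fin p ⊕ Fin p,
            l i * (Matrix.fromBlocks
              (dA ^ 2 • S + (dA * (1 - dA)) • S') ((dA * dB) • (S - S'))
              ((dA * dB) • (S - S')) (dB ^ 2 • S + (dB * (1 - dB)) • S')) i j * l j).toNNReal := by
      have hTnn : (0:ℝ) ≤ ∑ i : Fin p ⊕ Fin p, ∑ j : Fin p ⊕ Fin p,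
          l i * (Matrix.fromBlocks
            (dA ^ 2 • S + (dA * (1 - dA)) • S') ((dA * dB) • (S - S'))
            ((dA * dB) • (S - S')) (dB ^ 2 • S + (dB * (1 - dB)) • S')) i j * l j := by
        rw [← hvreal]; exact NNReal.coe_nonneg _
      refine NNReal.coe_injective ?_
      rw [Real.coe_toNNReal _ hTnn, hvreal]
    rw [hmean, hvar]
  · -- second part
    intro hU
    refine Filter.Eventually.of_forall fun ω => fun i => ?_
    have hsplit : XA ω i + XB ω i = ∑ k, Q k 0 * Xf k ω i := by
      rw [hXA, hXB, ← Finset.sum_union hAB, hU]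
    rw [hsplit]
    have : ∀ k, Q k 0 * Xf k ω i
        = Q k 0 * Q k 0 * X ω i + ∑ j : Fin r, (Q k 0 * Q k j.succ) * W j ω i := by
      intro k
      rw [hXf, mul_add, Finset.mul_sum]
      congr 1
      · ring
      · exact Finset.sum_congr rfl fun j _ => by ring
    simp_rw [this]
    rw [Finset.sum_add_distrib, ← Finset.sum_mul, hcol 0 0, Finset.sum_comm]
    have hz : ∀ j : Fin r, ∑ k, (Q k 0 * Q k j.succ) * W j ω i = 0 := by
      intro j
      rw [← Finset.sum_mul, hcol 0 j.succ, if_neg (Fin.succ_ne_zero j).symm, zero_mul]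
    simp [hz]
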